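/- Let E and F be GTESs over a signature Σ, and let a, b ∈ C⟨E∪F,∅⟩. Then R⟨E∪F,∅⟩ reaches the constant a from a proper extension of the constant b if and only if there is a path of positive length or a cycle from a to b in the auxiliary directed graph AUX[E;F], i.e. if and only if (a,b) lies in the transitive closure of the relation A[E;F]. -/

import Mathlib

inductive GTerm (S : Type) (ar : S → ℕ) : Type
  | node (σ : S) (args : Fin (ar σ) → GTerm S ar) : GTerm S ar

/-- The congruence on the ground term algebra generated by a set of equations `E`:
the smallest equivalence relation containing `E` and compatible with all operations. -/
inductive EqCong {S : Type} {ar : S → ℕ} (E : Set (GTerm S ar × GTerm S ar)) :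
    GTerm S ar → GTerm S ar → Prop
  | base {s t : GTerm S ar} : (s, t) ∈ E → EqCong E s t
  | refl (t : GTerm S ar) : EqCong E t t
  | symm {s t : GTerm S ar} : EqCong E s t → EqCong E t s
  | trans {s t u : GTerm S ar} : EqCong E s t → EqCong E t u → EqCong E s u
  | lift {σ : S} {f g : Fin (ar σ) → GTerm S ar} :
      (∀ i, EqCong E (f i) (g i)) → EqCong E (GTerm.node σ f) (GTerm.node σ g)

/-- A congruence on the ground term algebra: an equivalence relation compatible
with all operations. -/
def IsTermCongruence {S : Type} {ar : S → ℕ} (r : GTerm S ar → GTerm S ar → Prop) : Prop :=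
  Equivalence r ∧
    ∀ (σ : S) (f g : Fin (ar σ) → GTerm S ar),
      (∀ i, r (f i) (g i)) → r (GTerm.node σ f) (GTerm.node σ g)

/-- `Subterm s t` : `s` is a subterm of `t`. -/
inductive Subterm {S : Type} {ar : S → ℕ} : GTerm S ar → GTerm S ar → Prop
  | refl (t : GTerm S ar) : Subterm t t
  | node {s : GTerm S ar} {σ : S} {f : Fin (ar σ) → GTerm S ar} (i : Fin (ar σ)) :
      Subterm s (f i) → Subterm s (GTerm.node σ f)

/-- `ST E` : the set of all subterms of sides of equations of `E`. -/
def STSet {S : Type} {ar : S → ℕ} (E : Set (GTerm S ar × GTerm S ar)) : Set (GTerm S ar) :=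
  {t | ∃ p ∈ E, Subterm t p.1 ∨ Subterm t p.2}

/-- The `Θ⟨G⟩`-class of `t` inside `W`. -/
def thCls {S : Type} {ar : S → ℕ} (G : Set (GTerm S ar × GTerm S ar))
    (W : Set (GTerm S ar)) (t : GTerm S ar) : Set (GTerm S ar) :=
  {u | u ∈ W ∧ EqCong G t u}

/-- `Θ⟨G⟩` as a set of pairs: the restriction of the generated congruence to `W × W`. -/
def Theta {S : Type} {ar : S → ℕ} (G : Set (GTerm S ar × GTerm S ar))
    (W : Set (GTerm S ar)) : Set (GTerm S ar × GTerm S ar) :=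
  {p | p.1 ∈ W ∧ p.2 ∈ W ∧ EqCong G p.1 p.2}

/-- `C⟨G⟩` : the set of `Θ⟨G⟩`-classes of elements of `W`, viewed as new constants. -/
def CCl {S : Type} {ar : S → ℕ} (G : Set (GTerm S ar × GTerm S ar))
    (W : Set (GTerm S ar)) : Set (Set (GTerm S ar)) :=
  {A | ∃ t ∈ W, A = thCls G W t}

/-- Terms over the signature extended with a type `C` of new constants. -/
inductive XTerm (S : Type) (ar : S → ℕ) (C : Type) : Type
  | const (c : C) : XTerm S ar C
  | node (σ : S) (args : Fin (ar σ) → XTerm S ar C) : XTerm S ar C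

abbrev XRule (S : Type) (ar : S → ℕ) (C : Type) : Type :=
  XTerm S ar C × XTerm S ar C

/-- Embedding of ground terms over `Σ` into the extended terms. -/
def GTerm.toX {S : Type} {ar : S → ℕ} {C : Type} : GTerm S ar → XTerm S ar C
  | .node σ f => .node σ (fun i => (f i).toX)

/-- The GTRS `R⟨G⟩` (relative to the subterm set `W`): its rules are exactly
`σ(t₁/Θ⟨G⟩, …, t_m/Θ⟨G⟩) → σ(t₁,…,t_m)/Θ⟨G⟩` for `σ(t₁,…,t_m) ∈ W`. -/
def RRsys {S : Type} {ar : S → ℕ} (G : Set (GTerm S ar × GTerm S ar))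
    (W : Set (GTerm S ar)) : Set (XRule S ar (Set (GTerm S ar))) :=
  {r | ∃ (σ : S) (ts : Fin (ar σ) → GTerm S ar),
      GTerm.node σ ts ∈ W ∧
      r = (XTerm.node σ (fun i => XTerm.const (thCls G W (ts i))),
           XTerm.const (thCls G W (GTerm.node σ ts)))}

/-- One-step rewriting by a GTRS `R`. -/
inductive Rew {S : Type} {ar : S → ℕ} {C : Type} (R : Set (XRule S ar C)) :
    XTerm S ar C → XTerm S ar C → Prop
  | rule {l r : XTerm S ar C} : (l, r) ∈ R → Rew R l r
  | node {σ : S} {f g : Fin (ar σ) → XTerm S ar C} (i : Fin (ar σ)) :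
      Rew R (f i) (g i) → (∀ j, j ≠ i → f j = g j) →
      Rew R (XTerm.node σ f) (XTerm.node σ g)

/-- `→*_R` : reflexive–transitive closure of one-step rewriting. -/
def RewStar {S : Type} {ar : S → ℕ} {C : Type} (R : Set (XRule S ar C)) :
    XTerm S ar C → XTerm S ar C → Prop :=
  Relation.ReflTransGen (Rew R)

/-- A GTRS is total (w.r.t. a set `Cst` of constants) if every `σ(a₁,…,a_m)` with
`a₁,…,a_m ∈ Cst` is the left-hand side of some rule. -/
def TotalR {S : Type} {ar : S → ℕ} (R : Set (XRule S ar (Set (GTerm S ar))))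
    (Cst : Set (Set (GTerm S ar))) : Prop :=
  ∀ (σ : S) (av : Fin (ar σ) → Set (GTerm S ar)), (∀ i, av i ∈ Cst) →
    ∃ rhs, (XTerm.node σ (fun i => XTerm.const (av i)), rhs) ∈ R

/-- An extended term containing no new constants, i.e. a ground term over `Σ`. -/
def IsGroundX {S : Type} {ar : S → ℕ} {C : Type} (t : XTerm S ar C) : Prop :=
  ∃ s : GTerm S ar, GTerm.toX s = t

/-- `ProperExt b t` : `t = δ[b]` for some one-hole context `δ` over `Σ`
different from the hole itself. -/
inductive ProperExt {S : Type} {ar : S → ℕ} {C : Type} (b : XTerm S ar C) :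
    XTerm S ar C → Prop
  | base {σ : S} {f : Fin (ar σ) → XTerm S ar C} (i : Fin (ar σ)) :
      f i = b → (∀ j, j ≠ i → IsGroundX (f j)) → ProperExt b (XTerm.node σ f)
  | step {σ : S} {f : Fin (ar σ) → XTerm S ar C} (i : Fin (ar σ)) :
      ProperExt b (f i) → (∀ j, j ≠ i → IsGroundX (f j)) → ProperExt b (XTerm.node σ f)

/-- `R` reaches the constant `a` from a proper extension of the constant `b`. -/
def ReachesPE {S : Type} {ar : S → ℕ} (R : Set (XRule S ar (Set (GTerm S ar))))
    (a b : Set (GTerm S ar)) : Prop :=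
  ∃ t, ProperExt (XTerm.const b) t ∧ RewStar R t (XTerm.const a)

/-- The arc relation `A[E;F]` of the auxiliary directed graph: `(a,b)` is an arc iff some
rule `σ(a₁,…,a_m) → a` of `R` has `b = aᵢ` for some `i`. -/
def AuxArc {S : Type} {ar : S → ℕ} (R : Set (XRule S ar (Set (GTerm S ar))))
    (a b : Set (GTerm S ar)) : Prop :=
  ∃ (σ : S) (av : Fin (ar σ) → Set (GTerm S ar)) (i : Fin (ar σ)),
    (XTerm.node σ (fun j => XTerm.const (av j)), XTerm.const a) ∈ R ∧ av i = b

/-- `R1` keeps up with `Rall` writing the constant `a`. -/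
def KeepsUp {S : Type} {ar : S → ℕ}
    (R1 Rall : Set (XRule S ar (Set (GTerm S ar))))
    (C1 : Set (Set (GTerm S ar))) (a : Set (GTerm S ar)) : Prop :=
  ∀ (σ : S) (av : Fin (ar σ) → Set (GTerm S ar)),
    (XTerm.node σ (fun i => XTerm.const (av i)), XTerm.const a) ∈ Rall →
    ∀ bv : Fin (ar σ) → Set (GTerm S ar),
      (∀ i, bv i ∈ C1) → (∀ i, bv i ⊆ av i) →
      ∃ rhs, (XTerm.node σ (fun i => XTerm.const (bv i)), rhs) ∈ R1

/-- `R1` (with constant set `C1`) simulates `Rall` (with constant set `Call`) on `a`. -/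
def SimulatesOn {S : Type} {ar : S → ℕ}
    (R1 Rall : Set (XRule S ar (Set (GTerm S ar))))
    (C1 Call : Set (Set (GTerm S ar))) (a : Set (GTerm S ar)) : Prop :=
  a ∈ C1 ∧ ∀ b ∈ Call, ReachesPE Rall a b → KeepsUp R1 Rall C1 b

/-- `R⟨E,F⟩` and `R⟨F,E⟩` together simulate `R⟨E∪F,∅⟩`. -/
def TogetherSim {S : Type} {ar : S → ℕ}
    (E F : Set (GTerm S ar × GTerm S ar)) : Prop :=
  ∀ a ∈ CCl (E ∪ F) (STSet (E ∪ F)),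
    SimulatesOn (RRsys E (STSet (E ∪ F))) (RRsys (E ∪ F) (STSet (E ∪ F)))
      (CCl E (STSet (E ∪ F))) (CCl (E ∪ F) (STSet (E ∪ F))) a ∨
    SimulatesOn (RRsys F (STSet (E ∪ F))) (RRsys (E ∪ F) (STSet (E ∪ F)))
      (CCl F (STSet (E ∪ F))) (CCl (E ∪ F) (STSet (E ∪ F))) a


namespace Stmt13Aux
open Relation

variable {S : Type} {ar : S → ℕ}

lemma subterm_trans {s t u : GTerm S ar} (h1 : Subterm s t) (h2 : Subterm t u) :
    Subterm s u := by
  induction h2 with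
  | refl => exact h1
  | node i _ ih => exact Subterm.node i ih

lemma STSet_closed {G : Set (GTerm S ar × GTerm S ar)} {s t : GTerm S ar}
    (hs : Subterm s t) (ht : t ∈ STSet G) : s ∈ STSet G := by
  obtain ⟨p, hp, h⟩ := ht
  exact ⟨p, hp, h.imp (subterm_trans hs) (subterm_trans hs)⟩

lemma rew_single {C : Type} {R : Set (XRule S ar C)} {σ : S}
    (f : Fin (ar σ) → XTerm S ar C) (i : Fin (ar σ)) {s t : XTerm S ar C}
    (h : RewStar R s t) :
    RewStar R (XTerm.node σ (Function.update f i s))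
      (XTerm.node σ (Function.update f i t)) := by
  refine ReflTransGen.lift (fun x => XTerm.node σ (Function.update f i x)) ?_ _ _ h
  intro a b hab
  refine Rew.node i ?_ ?_
  · simpa using hab
  · intro j hj; simp [Function.update, hj]

lemma rew_multi {C : Type} {R : Set (XRule S ar C)} {σ : S}
    {f g : Fin (ar σ) → XTerm S ar C}
    (h : ∀ j, RewStar R (f j) (g j)) :
    RewStar R (XTerm.node σ f) (XTerm.node σ g) := by
  suffices H : ∀ (k : ℕ) (f : Fin (ar σ) → XTerm S ar C),
      (∀ j, RewStar R (f j) (g j)) → (∀ j : Fin (ar σ), k ≤ (j : ℕ) → f j = g j) →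
      RewStar R (XTerm.node σ f) (XTerm.node σ g) by
    exact H (ar σ) f h (fun j hj => absurd j.isLt (by omega))
  intro k
  induction k with
  | zero =>
    intro f _ h0
    have : f = g := funext fun j => h0 j (Nat.zero_le _)
    rw [this]
    exact Relation.ReflTransGen.refl
  | succ k ih =>
    intro f hf hk
    by_cases hlt : k < ar σ
    · set i : Fin (ar σ) := ⟨k, hlt⟩ with hi
      have step1 : RewStar R (XTerm.node σ f)
          (XTerm.node σ (Function.update f i (g i))) := by
        have := rew_single f i (hf i)
        rwa [Function.update_eq_self] at this
      refine step1.trans (ih _ ?_ ?_)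
      · intro j
        by_cases hji : j = i
        · subst hji; simp only [Function.update_self]
          exact Relation.ReflTransGen.refl
        · rw [Function.update_of_ne hji]; exact hf j
      · intro j hj
        by_cases hji : j = i
        · subst hji; simp
        · have : k + 1 ≤ (j : ℕ) := by
            rcases Nat.lt_or_ge (j : ℕ) (k+1) with h' | h'
            · exfalso; apply hji; apply Fin.ext
              simp only [hi]; omega
            · exact h'
          simp [Function.update, hji, hk j this]
    · exact ih f hf (fun j hj => absurd j.isLt (by omega))

lemma not_rew_const {G : Set (GTerm S ar × GTerm S ar)} {W : Set (GTerm S ar)}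
    {c : Set (GTerm S ar)} {v : XTerm S ar (Set (GTerm S ar))}
    (h : Rew (RRsys G W) (XTerm.const c) v) : False := by
  cases h with
  | rule hm =>
    obtain ⟨σ, ts, _, heq⟩ := hm
    exact absurd (congrArg (fun p : XRule S ar (Set (GTerm S ar)) => p.1) heq) (by simp)

lemma rewstar_const {G : Set (GTerm S ar × GTerm S ar)} {W : Set (GTerm S ar)}
    {c : Set (GTerm S ar)} {v : XTerm S ar (Set (GTerm S ar))}
    (h : RewStar (RRsys G W) (XTerm.const c) v) : v = XTerm.const c := by
  rcases h.cases_head with h | ⟨u, hstep, _⟩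
  · exact h.symm
  · exact (not_rew_const hstep).elim

lemma decomp {G : Set (GTerm S ar × GTerm S ar)} {W : Set (GTerm S ar)}
    {a : Set (GTerm S ar)} :
    ∀ {u : XTerm S ar (Set (GTerm S ar))},
      RewStar (RRsys G W) u (XTerm.const a) →
      ∀ {σ : S} {f : Fin (ar σ) → XTerm S ar (Set (GTerm S ar))},
        u = XTerm.node σ f →
        ∃ av : Fin (ar σ) → Set (GTerm S ar),
          (∀ j, RewStar (RRsys G W) (f j) (XTerm.const (av j))) ∧
          (XTerm.node σ (fun j => XTerm.const (av j)), XTerm.const a) ∈ RRsys G W := by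
  intro u h
  induction h using Relation.ReflTransGen.head_induction_on with
  | refl => intro σ f hf; exact absurd hf (by simp)
  | head hstep hrest ih =>
    intro σ f hf
    subst hf
    cases hstep with
    | rule hm =>
      obtain ⟨σ', ts, hW, heq⟩ := hm
      injection heq with h1 h2
      injection h1 with hσ harg
      subst hσ
      have harg' := eq_of_heq harg
      subst harg'
      subst h2
      have := rewstar_const hrest
      injection this with hca
      refine ⟨fun j => thCls G W (ts j), fun j => Relation.ReflTransGen.refl, ?_⟩
      exact ⟨σ, ts, hW, by rw [hca]⟩
    | node i hi hoth =>
      rename_i g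
      obtain ⟨av, hs, hrule⟩ := ih rfl
      refine ⟨av, fun j => ?_, hrule⟩
      by_cases hji : j = i
      · subst hji; exact (hs j).head hi
      · rw [hoth j hji]; exact hs j

lemma forward {G : Set (GTerm S ar × GTerm S ar)} {W : Set (GTerm S ar)}
    {b : Set (GTerm S ar)} :
    ∀ {t : XTerm S ar (Set (GTerm S ar))}, ProperExt (XTerm.const b) t →
    ∀ {a : Set (GTerm S ar)}, RewStar (RRsys G W) t (XTerm.const a) →
    Relation.TransGen (AuxArc (RRsys G W)) a b := by
  intro t hpe
  induction hpe with
  | base i hfi hgr =>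
    intro a hr
    obtain ⟨av, hs, hrule⟩ := decomp hr rfl
    have h1 : RewStar (RRsys G W) (XTerm.const b) (XTerm.const (av i)) := hfi ▸ hs i
    have h2 := rewstar_const h1
    injection h2 with h3
    exact TransGen.single ⟨_, av, i, hrule, h3⟩
  | step i hpe hgr ih =>
    intro a hr
    obtain ⟨av, hs, hrule⟩ := decomp hr rfl
    exact TransGen.head ⟨_, av, i, hrule, rfl⟩ (ih (hs i))

lemma toX_reach {G : Set (GTerm S ar × GTerm S ar)} :
    ∀ {s : GTerm S ar}, s ∈ STSet G →
      RewStar (RRsys G (STSet G)) (GTerm.toX s)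
        (XTerm.const (thCls G (STSet G) s)) := by
  intro s
  induction s with
  | node σ ts ih =>
    intro hs
    have hsub : ∀ i, ts i ∈ STSet G := fun i =>
      STSet_closed (Subterm.node i (Subterm.refl _)) hs
    have h1 : RewStar (RRsys G (STSet G)) (GTerm.toX (GTerm.node σ ts))
        (XTerm.node σ fun i => XTerm.const (thCls G (STSet G) (ts i))) := by
      show RewStar (RRsys G (STSet G)) (XTerm.node σ fun i => (ts i).toX) _
      exact rew_multi (fun j => ih j (hsub j))
    exact h1.trans (ReflTransGen.single (Rew.rule ⟨σ, ts, hs, rfl⟩))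

lemma arc_unpack {G : Set (GTerm S ar × GTerm S ar)} {a c : Set (GTerm S ar)}
    (h : AuxArc (RRsys G (STSet G)) a c) :
    ∃ (σ : S) (ts : Fin (ar σ) → GTerm S ar) (i : Fin (ar σ)),
      GTerm.node σ ts ∈ STSet G ∧ a = thCls G (STSet G) (GTerm.node σ ts) ∧
      thCls G (STSet G) (ts i) = c := by
  obtain ⟨σ, av, i, hrule, havi⟩ := h
  obtain ⟨σ', ts, hw, heq⟩ := hrule
  injection heq with h1 h2
  injection h1 with hσ harg
  subst hσ
  have harg' := eq_of_heq harg
  injection h2 with ha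
  refine ⟨σ, ts, i, hw, ha, ?_⟩
  have := congrFun harg' i
  injection this with hi
  rw [← hi, havi]

lemma build {G : Set (GTerm S ar × GTerm S ar)} {a c : Set (GTerm S ar)}
    (h : AuxArc (RRsys G (STSet G)) a c) :
    ∃ (σ : S) (f : Fin (ar σ) → XTerm S ar (Set (GTerm S ar))) (i : Fin (ar σ)),
      (∀ j, j ≠ i → IsGroundX (f j)) ∧
      (∀ t, RewStar (RRsys G (STSet G)) t (XTerm.const c) →
        RewStar (RRsys G (STSet G)) (XTerm.node σ (Function.update f i t))
          (XTerm.const a)) := by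
  obtain ⟨σ, ts, i, hw, ha, hc⟩ := arc_unpack h
  have hsub : ∀ j, ts j ∈ STSet G := fun j =>
    STSet_closed (Subterm.node j (Subterm.refl _)) hw
  refine ⟨σ, fun j => (ts j).toX, i, fun j _ => ⟨ts j, rfl⟩, ?_⟩
  intro t ht
  have step1 := rew_single (fun j => (ts j).toX) i ht
  refine step1.trans ?_
  have step2 : RewStar (RRsys G (STSet G))
      (XTerm.node σ (Function.update (fun j => (ts j).toX) i (XTerm.const c)))
      (XTerm.node σ fun j => XTerm.const (thCls G (STSet G) (ts j))) := by
    refine rew_multi fun j => ?_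
    by_cases hji : j = i
    · subst hji
      rw [Function.update_self, ← hc]
      exact Relation.ReflTransGen.refl
    · simp only [Function.update, dif_neg hji]
      exact toX_reach (hsub j)
  refine step2.trans (ReflTransGen.single (Rew.rule ?_))
  rw [ha]
  exact ⟨σ, ts, hw, rfl⟩

lemma backward {G : Set (GTerm S ar × GTerm S ar)} {a b : Set (GTerm S ar)}
    (h : Relation.TransGen (AuxArc (RRsys G (STSet G))) a b) :
    ReachesPE (RRsys G (STSet G)) a b := by
  induction h using Relation.TransGen.head_induction_on with
  | single harc =>
    obtain ⟨σ, f, i, hgr, hrw⟩ := build harc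
    refine ⟨XTerm.node σ (Function.update f i (XTerm.const b)), ?_, ?_⟩
    · refine ProperExt.base i (by simp) ?_
      intro j hj
      rw [Function.update_of_ne hj]
      exact hgr j hj
    · exact hrw _ Relation.ReflTransGen.refl
  | head harc _ IH =>
    obtain ⟨t, hpe, hr⟩ := IH
    obtain ⟨σ, f, i, hgr, hrw⟩ := build harc
    refine ⟨XTerm.node σ (Function.update f i t), ?_, ?_⟩
    · refine ProperExt.step i (by simpa using hpe) ?_
      intro j hj
      rw [Function.update_of_ne hj]
      exact hgr j hj
    · exact hrw t hr

end Stmt13Aux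

theorem stmt_13 {S : Type} [Fintype S] {ar : S → ℕ} (hconst : ∃ c : S, ar c = 0)
    (E F : Set (GTerm S ar × GTerm S ar)) (hEfin : E.Finite) (hFfin : F.Finite)
    (a b : Set (GTerm S ar))
    (ha : a ∈ CCl (E ∪ F) (STSet (E ∪ F))) (hb : b ∈ CCl (E ∪ F) (STSet (E ∪ F))) :
    ReachesPE (RRsys (E ∪ F) (STSet (E ∪ F))) a b ↔
    Relation.TransGen (AuxArc (RRsys (E ∪ F) (STSet (E ∪ F)))) a b := by
  constructor
  · rintro ⟨t, hpe, hr⟩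
    exact Stmt13Aux.forward hpe hr
  · exact Stmt13Aux.backward
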